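/- For all natural numbers n, k and every real number α, the following two expansions are equal: Σ_{r=0}^{n} q^{αr} · binom(n,r)_{q^s} · S_{s,q}[r,k] · Π_{i=0}^{n−r−1} [α + s·i]_q = Σ_{r=0}^{n} q^{αk} · S_{s,q}[n,r] · binom(r,k)_{q^{s−1}} · Π_{i=0}^{r−k−1} [α + i·(s−1)]_q. (Both sides equal the total weight of all placements of n−k rooks on the augmented staircase board J'_{n;α}; Lemma on two expansions.) -/
import Mathlib

/-- The `q`-bracket `[t]_q = (q^t - 1)/(q - 1)` (real exponentiation). -/
noncomputable def qBracket (q t : ℝ) : ℝ := (q ^ t - 1) / (q - 1)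

open Classical in
/-- The `Q`-binomial coefficient: the sum of `Q^(t₁+⋯+t_{n-k})` over all weakly
increasing integer tuples `0 ≤ t₁ ≤ ⋯ ≤ t_{n-k} ≤ k` when `k ≤ n`, and `0` when `k > n`. -/
noncomputable def qBinom (Q : ℝ) (n k : ℕ) : ℝ :=
  if k ≤ n then
    ∑ f ∈ Finset.univ.filter (fun f : Fin (n - k) → Fin (k + 1) => Monotone f),
      Q ^ (∑ i, (f i : ℕ))
  else 0

/-- The generalized `q`-Stirling numbers `S_{s,q}[n,k]` of Goldman–Haglund type. -/
noncomputable def genStirling (s q : ℝ) : ℕ → ℕ → ℝ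
  | 0, 0 => 1
  | 0, _ + 1 => 0
  | _ + 1, 0 => 0
  | n + 1, k + 1 =>
    if k + 1 ≤ n + 1 then
      q ^ (s * (n : ℝ) - (s - 1) * (k : ℝ)) * genStirling s q n k
        + qBracket q (s * (n : ℝ) - (s - 1) * ((k : ℝ) + 1)) * genStirling s q n (k + 1)
    else 0

open Finset

/- ## Basic lemmas -/

lemma qBracket_zero (q : ℝ) : qBracket q 0 = 0 := by simp [qBracket]

lemma genStirling_eq_zero (s q : ℝ) : ∀ n k, n < k → genStirling s q n k = 0 := by
  intro n
  induction n with
  | zero => intro k hk; match k, hk with | k+1, _ => rfl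
  | succ n ih =>
    intro k hk
    match k, hk with
    | k+1, hk =>
      rw [genStirling]
      rw [if_neg (by omega)]

lemma genStirling_succ_succ (s q : ℝ) (n k : ℕ) :
    genStirling s q (n+1) (k+1)
      = q ^ (s * (n : ℝ) - (s - 1) * (k : ℝ)) * genStirling s q n k
        + qBracket q (s * (n : ℝ) - (s - 1) * ((k : ℝ) + 1)) * genStirling s q n (k + 1) := by
  rw [genStirling]
  by_cases h : k + 1 ≤ n + 1
  · rw [if_pos h]
  · rw [if_neg h, genStirling_eq_zero s q n k (by omega),
      genStirling_eq_zero s q n (k+1) (by omega)]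
    ring

lemma genStirling_succ_zero (s q : ℝ) (n : ℕ) : genStirling s q (n+1) 0 = 0 := rfl

lemma genStirling_zero_succ (s q : ℝ) (k : ℕ) : genStirling s q 0 (k+1) = 0 := rfl

/- ## qBinom values and Pascal's rule -/

lemma qBinom_gt (Q : ℝ) (n k : ℕ) (h : n < k) : qBinom Q n k = 0 := by
  rw [qBinom, if_neg (by omega)]

lemma qBinom_zero_right (Q : ℝ) (n : ℕ) : qBinom Q n 0 = 1 := by
  rw [qBinom, if_pos (Nat.zero_le n)]
  have h1 : (Finset.univ.filter (fun f : Fin (n - 0) → Fin (0 + 1) => Monotone f)) =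
      {fun _ => 0} := by
    ext f
    simp only [Finset.mem_filter, Finset.mem_univ, true_and, Finset.mem_singleton]
    constructor
    · intro _; funext i; omega
    · rintro rfl; exact monotone_const
  rw [h1]
  simp

lemma qBinom_self (Q : ℝ) (n : ℕ) : qBinom Q n n = 1 := by
  rw [qBinom, if_pos le_rfl]
  have e : n - n = 0 := by omega
  have h1 : (Finset.univ.filter (fun f : Fin (n - n) → Fin (n + 1) => Monotone f)) =
      Finset.univ := by
    ext f
    simp only [Finset.mem_filter, Finset.mem_univ, true_and, iff_true]
    intro a
    exact absurd a.2 (by omega)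
  rw [h1]
  have h2 : ∀ f : Fin (n - n) → Fin (n + 1), (∑ i, (f i : ℕ)) = 0 := by
    intro f
    apply Finset.sum_eq_zero
    intro i _
    exact absurd i.2 (by omega)
  have h3 : (Finset.univ : Finset (Fin (n-n) → Fin (n+1))).card = 1 := by
    rw [Finset.card_univ, Fintype.card_fun]
    simp [e]
  calc ∑ f : Fin (n - n) → Fin (n + 1), Q ^ (∑ i, (f i : ℕ))
      = ∑ _f : Fin (n - n) → Fin (n + 1), (1:ℝ) := by
        apply Finset.sum_congr rfl; intro f _; rw [h2 f]; simp
    _ = 1 := by rw [Finset.sum_const, h3]; simp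

lemma cons_monotone {m c : ℕ} {g : Fin m → Fin (c+2)} (hg : Monotone g) :
    Monotone (Fin.cons 0 g : Fin (m+1) → Fin (c+2)) := by
  intro a b hab
  induction a using Fin.cases with
  | zero => simp [Fin.cons_zero, Fin.zero_le]
  | succ i =>
    induction b using Fin.cases with
    | zero => exact absurd hab (by simp [Fin.le_def])
    | succ j =>
      simp only [Fin.cons_succ]
      exact hg (by simpa [Fin.succ_le_succ_iff] using hab)

open Classical in
noncomputable def mSum (Q : ℝ) (a b : ℕ) : ℝ :=
  ∑ f ∈ Finset.univ.filter (fun f : Fin a → Fin b => Monotone f), Q ^ (∑ i, (f i : ℕ))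

lemma qBinom_eq (Q : ℝ) (n k : ℕ) :
    qBinom Q n k = if k ≤ n then mSum Q (n - k) (k + 1) else 0 := rfl

lemma key_pascal (Q : ℝ) (m c : ℕ) :
    mSum Q (m+1) (c+2) = Q^(m+1) * mSum Q (m+1) (c+1) + mSum Q m (c+2) := by
  unfold mSum
  have split := Finset.sum_filter_add_sum_filter_not
    (univ.filter (fun f : Fin (m+1) → Fin (c+2) => Monotone f)) (fun f => f 0 = 0)
    (fun f => Q ^ (∑ i, (f i : ℕ)))
  have hB : (∑ f ∈ (univ.filter (fun f : Fin (m+1) → Fin (c+2) => Monotone f)).filter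
      (fun f => f 0 = 0), Q ^ (∑ i, (f i : ℕ)))
      = (∑ f ∈ univ.filter (fun f : Fin m → Fin (c+2) => Monotone f), Q ^ (∑ i, (f i : ℕ))) := by
    apply Finset.sum_nbij' (i := fun f => f ∘ Fin.succ) (j := fun g => Fin.cons 0 g)
    · intro f hf
      simp only [Finset.mem_filter, Finset.mem_univ, true_and] at hf ⊢
      exact fun a b hab => hf.1 (Fin.succ_le_succ_iff.mpr hab)
    · intro g hg
      simp only [Finset.mem_filter, Finset.mem_univ, true_and] at hg ⊢
      exact ⟨cons_monotone hg, Fin.cons_zero _ _⟩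
    · intro f hf
      simp only [Finset.mem_filter, Finset.mem_univ, true_and] at hf
      funext x
      induction x using Fin.cases with
      | zero => simp [hf.2]
      | succ i => simp
    · intro g hg
      funext x
      simp
    · intro f hf
      simp only [Finset.mem_filter, Finset.mem_univ, true_and] at hf
      rw [Fin.sum_univ_succ, hf.2]
      simp
  have hA : (∑ f ∈ (univ.filter (fun f : Fin (m+1) → Fin (c+2) => Monotone f)).filter
      (fun f => ¬ f 0 = 0), Q ^ (∑ i, (f i : ℕ)))
      = Q^(m+1) * (∑ f ∈ univ.filter (fun f : Fin (m+1) → Fin (c+1) => Monotone f),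
          Q ^ (∑ i, (f i : ℕ))) := by
    rw [Finset.mul_sum]
    apply Finset.sum_nbij'
      (i := fun f => fun x => (⟨(f x : ℕ) - 1, by omega⟩ : Fin (c+1)))
      (j := fun g => fun x => (g x).succ)
    · intro f hf
      simp only [Finset.mem_filter, Finset.mem_univ, true_and] at hf ⊢
      intro a b hab
      simp only [Fin.mk_le_mk]
      exact Nat.sub_le_sub_right (hf.1 hab) 1
    · intro g hg
      simp only [Finset.mem_filter, Finset.mem_univ, true_and] at hg ⊢
      refine ⟨fun a b hab => Fin.succ_le_succ_iff.mpr (hg hab), ?_⟩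
      exact (Fin.succ_ne_zero _)
    · intro f hf
      simp only [Finset.mem_filter, Finset.mem_univ, true_and] at hf
      have hpos : ∀ x, 1 ≤ (f x : ℕ) := by
        intro x
        have h0 : f 0 ≤ f x := hf.1 (Fin.zero_le x)
        have : (f 0 : ℕ) ≠ 0 := fun h => hf.2 (Fin.ext h)
        omega
      funext x
      apply Fin.ext
      simp only [Fin.val_succ]
      have := hpos x
      omega
    · intro g hg
      funext x
      apply Fin.ext
      simp
    · intro f hf
      simp only [Finset.mem_filter, Finset.mem_univ, true_and] at hf
      have hpos : ∀ x, 1 ≤ (f x : ℕ) := by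
        intro x
        have h0 : f 0 ≤ f x := hf.1 (Fin.zero_le x)
        have : (f 0 : ℕ) ≠ 0 := fun h => hf.2 (Fin.ext h)
        omega
      have hsum : (∑ i, (f i : ℕ)) = (m+1) + ∑ i : Fin (m+1), ((f i : ℕ) - 1) := by
        calc (∑ i, (f i : ℕ)) = ∑ i : Fin (m+1), (((f i : ℕ) - 1) + 1) :=
              Finset.sum_congr rfl (fun i _ => by have := hpos i; omega)
          _ = (∑ i : Fin (m+1), ((f i : ℕ) - 1)) + (m+1) := by
              rw [Finset.sum_add_distrib]; simp
          _ = (m+1) + ∑ i : Fin (m+1), ((f i : ℕ) - 1) := by ring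
      rw [hsum, pow_add]
  rw [← split, hA, hB]; ring

lemma qBinom_pascal (Q : ℝ) (n k : ℕ) :
    qBinom Q (n+1) (k+1) = Q^(n-k) * qBinom Q n k + qBinom Q n (k+1) := by
  rcases lt_trichotomy n k with h | h | h
  · rw [qBinom_gt Q (n+1) (k+1) (by omega), qBinom_gt Q n k (by omega),
      qBinom_gt Q n (k+1) (by omega)]
    ring
  · subst h
    rw [qBinom_self, qBinom_self, qBinom_gt Q n (n+1) (by omega), Nat.sub_self]
    ring
  · obtain ⟨m, rfl⟩ : ∃ m, n = m + k + 1 := ⟨n - k - 1, by omega⟩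
    rw [qBinom_eq, if_pos (by omega), qBinom_eq, if_pos (by omega),
      qBinom_eq, if_pos (by omega)]
    rw [show m + k + 1 + 1 - (k + 1) = m + 1 from by omega,
      show m + k + 1 - k = m + 1 from by omega,
      show m + k + 1 - (k + 1) = m from by omega]
    exact key_pascal Q m k

/- ## Scalar identities -/

lemma Lstep (q s α : ℝ) (hq : 0 < q) (hq1 : q ≠ 1) (N I K B Sk Sk1 P : ℝ) :
    q^(α*(I+1)) * (q^(s*(N-I)) * B) *
        (q^(s*I-(s-1)*K) * Sk + qBracket q (s*I-(s-1)*(K+1)) * Sk1) * P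
      + q^(α*I) * B * Sk1 * (P * qBracket q (α + s*(N-I)))
    = q^(s*N-(s-1)*K+α) * (q^(α*I)*B*Sk*P)
      + qBracket q (s*N-(s-1)*(K+1)+α) * (q^(α*I)*B*Sk1*P) := by
  have hq1' : q - 1 ≠ 0 := sub_ne_zero.mpr hq1
  have h1 : q^(α*(I+1)) = q^(α*I) * q^α := by
    rw [show α*(I+1) = α*I + α from by ring, Real.rpow_add hq]
  have h2 : q^(s*(N-I)) = q^(s*N) / q^(s*I) := by
    rw [show s*(N-I) = s*N - s*I from by ring, Real.rpow_sub hq]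
  have h3 : q^(s*I-(s-1)*K) = q^(s*I) / q^((s-1)*K) := by
    rw [Real.rpow_sub hq]
  have h4 : q^(s*I-(s-1)*(K+1)) = q^(s*I) / (q^((s-1)*K) * q^(s-1)) := by
    rw [show s*I-(s-1)*(K+1) = s*I - ((s-1)*K + (s-1)) from by ring, Real.rpow_sub hq,
      Real.rpow_add hq]
  have h5 : q^(α + s*(N-I)) = q^α * (q^(s*N) / q^(s*I)) := by
    rw [show α + s*(N-I) = (α + s*N) - s*I from by ring, Real.rpow_sub hq, Real.rpow_add hq]
    ring
  have h6 : q^(s*N-(s-1)*K+α) = q^(s*N) * q^α / q^((s-1)*K) := by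
    rw [show s*N-(s-1)*K+α = (s*N + α) - (s-1)*K from by ring, Real.rpow_sub hq,
      Real.rpow_add hq]
  have h7 : q^(s*N-(s-1)*(K+1)+α) = q^(s*N) * q^α / (q^((s-1)*K) * q^(s-1)) := by
    rw [show s*N-(s-1)*(K+1)+α = (s*N + α) - ((s-1)*K + (s-1)) from by ring,
      Real.rpow_sub hq, Real.rpow_add hq, Real.rpow_add hq]
  have p1 : q^(s*I) ≠ 0 := ne_of_gt (Real.rpow_pos_of_pos hq _)
  have p2 : q^((s-1)*K) ≠ 0 := ne_of_gt (Real.rpow_pos_of_pos hq _)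
  have p3 : q^(s-1) ≠ 0 := ne_of_gt (Real.rpow_pos_of_pos hq _)
  unfold qBracket
  rw [h1, h2, h3, h4, h5, h6, h7]
  field_simp
  ring

lemma RstepA (q s α : ℝ) (hq : 0 < q) (N R K B P2 : ℝ) :
    q^(α*(K+1)) * q^(s*N-(s-1)*R) * (q^((s-1)*(R-K)) * B) * P2
    = q^(s*N-(s-1)*K+α) * (q^(α*K) * B * P2) := by
  have h1 : q^(α*(K+1)) = q^(α*K) * q^α := by
    rw [show α*(K+1) = α*K + α from by ring, Real.rpow_add hq]
  have h2 : q^(s*N-(s-1)*R) * q^((s-1)*(R-K)) = q^(s*N-(s-1)*K) := by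
    rw [← Real.rpow_add hq]; congr 1; ring
  have h3 : q^(s*N-(s-1)*K+α) = q^(s*N-(s-1)*K) * q^α := Real.rpow_add hq _ _
  calc q^(α*(K+1)) * q^(s*N-(s-1)*R) * (q^((s-1)*(R-K)) * B) * P2
      = (q^(s*N-(s-1)*R) * q^((s-1)*(R-K))) * (q^(α*(K+1)) * B * P2) := by ring
    _ = q^(s*N-(s-1)*K) * ((q^(α*K) * q^α) * B * P2) := by rw [h2, h1]
    _ = q^(s*N-(s-1)*K+α) * (q^(α*K) * B * P2) := by rw [h3]; ring

lemma RstepB (q s α : ℝ) (hq : 0 < q) (hq1 : q ≠ 1) (N R K B P2 : ℝ) :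
    q^(α*(K+1)) * q^(s*N-(s-1)*R) * B * (P2 * qBracket q (α + (R-(K+1))*(s-1)))
      + q^(α*(K+1)) * qBracket q (s*N-(s-1)*R) * B * P2
    = qBracket q (s*N-(s-1)*(K+1)+α) * (q^(α*(K+1)) * B * P2) := by
  have hq1' : q - 1 ≠ 0 := sub_ne_zero.mpr hq1
  have h1 : q^(α + (R-(K+1))*(s-1)) = q^α * (q^((s-1)*R) / (q^((s-1)*K) * q^(s-1))) := by
    rw [show α + (R-(K+1))*(s-1) = (α + (s-1)*R) - ((s-1)*K + (s-1)) from by ring,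
      Real.rpow_sub hq, Real.rpow_add hq, Real.rpow_add hq]
    ring
  have h2 : q^(s*N-(s-1)*R) = q^(s*N) / q^((s-1)*R) := by rw [Real.rpow_sub hq]
  have h3 : q^(s*N-(s-1)*(K+1)+α) = q^(s*N) * q^α / (q^((s-1)*K) * q^(s-1)) := by
    rw [show s*N-(s-1)*(K+1)+α = (s*N + α) - ((s-1)*K + (s-1)) from by ring,
      Real.rpow_sub hq, Real.rpow_add hq, Real.rpow_add hq]
  have p1 : q^((s-1)*R) ≠ 0 := ne_of_gt (Real.rpow_pos_of_pos hq _)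
  have p2 : q^((s-1)*K) ≠ 0 := ne_of_gt (Real.rpow_pos_of_pos hq _)
  have p3 : q^(s-1) ≠ 0 := ne_of_gt (Real.rpow_pos_of_pos hq _)
  unfold qBracket
  rw [h1, h2, h3]
  field_simp
  ring

lemma Rstep0 (q s α : ℝ) (hq : 0 < q) (hq1 : q ≠ 1) (N R P2 : ℝ) :
    q^(s*N-(s-1)*R) * (P2 * qBracket q (α + R*(s-1))) + qBracket q (s*N-(s-1)*R) * P2
    = qBracket q (α + s*N) * P2 := by
  have hq1' : q - 1 ≠ 0 := sub_ne_zero.mpr hq1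
  have h1 : q^(α + R*(s-1)) = q^α * q^((s-1)*R) := by
    rw [show α + R*(s-1) = α + (s-1)*R from by ring, Real.rpow_add hq]
  have h2 : q^(s*N-(s-1)*R) = q^(s*N) / q^((s-1)*R) := by rw [Real.rpow_sub hq]
  have h3 : q^(α + s*N) = q^α * q^(s*N) := Real.rpow_add hq _ _
  have p1 : q^((s-1)*R) ≠ 0 := ne_of_gt (Real.rpow_pos_of_pos hq _)
  unfold qBracket
  rw [h1, h2, h3]
  field_simp
  ring

/- ## The two expansions as functions -/

noncomputable def Lf (q s α : ℝ) (n k : ℕ) : ℝ :=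
  ∑ r ∈ Finset.range (n + 1),
    q ^ (α * (r : ℝ)) * qBinom (q ^ s) n r * genStirling s q r k *
      ∏ i ∈ Finset.range (n - r), qBracket q (α + s * (i : ℝ))

noncomputable def Rf (q s α : ℝ) (n k : ℕ) : ℝ :=
  ∑ r ∈ Finset.range (n + 1),
    q ^ (α * (k : ℝ)) * genStirling s q n r * qBinom (q ^ (s - 1)) r k *
      ∏ i ∈ Finset.range (r - k), qBracket q (α + (i : ℝ) * (s - 1))

lemma rpow_pow (q s : ℝ) (hq : 0 < q) (m : ℕ) : ((q^s : ℝ))^m = q^(s*(m:ℝ)) := by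
  calc ((q^s : ℝ))^m = (q^s) ^ ((m:ℕ):ℝ) := (Real.rpow_natCast _ _).symm
    _ = q^(s*(m:ℝ)) := (Real.rpow_mul hq.le _ _).symm

lemma Lf_rec (q s α : ℝ) (hq : 0 < q) (hq1 : q ≠ 1) (n k : ℕ) :
    Lf q s α (n+1) (k+1)
      = q ^ (s*(n:ℝ) - (s-1)*(k:ℝ) + α) * Lf q s α n k
        + qBracket q (s*(n:ℝ) - (s-1)*((k:ℝ)+1) + α) * Lf q s α n (k+1) := by
  have h1 : Lf q s α (n+1) (k+1)
      = ∑ i ∈ Finset.range (n+1),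
          q ^ (α * ((i+1:ℕ):ℝ)) * qBinom (q^s) (n+1) (i+1) * genStirling s q (i+1) (k+1) *
            ∏ j ∈ Finset.range (n+1-(i+1)), qBracket q (α + s*(j:ℝ)) := by
    have h := Finset.sum_range_succ'
      (fun r => q ^ (α * (r:ℝ)) * qBinom (q^s) (n+1) r * genStirling s q r (k+1) *
        ∏ j ∈ Finset.range (n+1-r), qBracket q (α + s*(j:ℝ))) (n+1)
    unfold Lf
    rw [h, genStirling_zero_succ]
    ring
  have h2 : ∀ i ∈ Finset.range (n+1),
      q ^ (α * ((i+1:ℕ):ℝ)) * qBinom (q^s) (n+1) (i+1) * genStirling s q (i+1) (k+1) *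
          ∏ j ∈ Finset.range (n+1-(i+1)), qBracket q (α + s*(j:ℝ))
      = (q ^ (α * ((i+1:ℕ):ℝ)) * ((q^s)^(n-i) * qBinom (q^s) n i) *
            genStirling s q (i+1) (k+1) * ∏ j ∈ Finset.range (n-i), qBracket q (α + s*(j:ℝ)))
        + (q ^ (α * ((i+1:ℕ):ℝ)) * qBinom (q^s) n (i+1) * genStirling s q (i+1) (k+1) *
            ∏ j ∈ Finset.range (n+1-(i+1)), qBracket q (α + s*(j:ℝ))) := by
    intro i hi
    rw [qBinom_pascal, show n+1-(i+1) = n-i from by omega]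
    ring
  have h3 : (∑ i ∈ Finset.range (n+1),
        q ^ (α * ((i+1:ℕ):ℝ)) * qBinom (q^s) n (i+1) * genStirling s q (i+1) (k+1) *
          ∏ j ∈ Finset.range (n+1-(i+1)), qBracket q (α + s*(j:ℝ)))
      = ∑ r ∈ Finset.range (n+1),
          q ^ (α * (r:ℝ)) * qBinom (q^s) n r * genStirling s q r (k+1) *
            ∏ j ∈ Finset.range (n+1-r), qBracket q (α + s*(j:ℝ)) := by
    have ha := Finset.sum_range_succ'
      (fun r => q ^ (α * (r:ℝ)) * qBinom (q^s) n r * genStirling s q r (k+1) *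
        ∏ j ∈ Finset.range (n+1-r), qBracket q (α + s*(j:ℝ))) (n+1)
    have hb := Finset.sum_range_succ
      (fun r => q ^ (α * (r:ℝ)) * qBinom (q^s) n r * genStirling s q r (k+1) *
        ∏ j ∈ Finset.range (n+1-r), qBracket q (α + s*(j:ℝ))) (n+1)
    simp only [genStirling_zero_succ, qBinom_gt (q^s) n (n+1) (by omega), mul_zero, zero_mul,
      add_zero] at ha hb
    rw [← ha, hb]
  rw [h1, Finset.sum_congr rfl h2, Finset.sum_add_distrib, h3]
  unfold Lf
  rw [Finset.mul_sum, Finset.mul_sum, ← Finset.sum_add_distrib, ← Finset.sum_add_distrib]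
  apply Finset.sum_congr rfl
  intro i hi
  have hin : i ≤ n := by simpa using Nat.lt_succ_iff.mp (Finset.mem_range.mp hi)
  rw [genStirling_succ_succ s q i k, show n+1-i = (n-i)+1 from by omega,
    Finset.prod_range_succ, rpow_pow q s hq (n-i), Nat.cast_sub hin]
  push_cast
  linear_combination Lstep q s α hq hq1 (n:ℝ) (i:ℝ) (k:ℝ) (qBinom (q^s) n i)
    (genStirling s q i k) (genStirling s q i (k+1))
    (∏ j ∈ Finset.range (n-i), qBracket q (α + s*(j:ℝ)))

lemma Rf_rec (q s α : ℝ) (hq : 0 < q) (hq1 : q ≠ 1) (n k : ℕ) :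
    Rf q s α (n+1) (k+1)
      = q ^ (s*(n:ℝ) - (s-1)*(k:ℝ) + α) * Rf q s α n k
        + qBracket q (s*(n:ℝ) - (s-1)*((k:ℝ)+1) + α) * Rf q s α n (k+1) := by
  have h1 : Rf q s α (n+1) (k+1)
      = ∑ i ∈ Finset.range (n+1),
          q ^ (α * ((k+1:ℕ):ℝ)) * genStirling s q (n+1) (i+1) * qBinom (q^(s-1)) (i+1) (k+1) *
            ∏ j ∈ Finset.range ((i+1)-(k+1)), qBracket q (α + (j:ℝ)*(s-1)) := by
    have h := Finset.sum_range_succ'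
      (fun r => q ^ (α * ((k+1:ℕ):ℝ)) * genStirling s q (n+1) r * qBinom (q^(s-1)) r (k+1) *
        ∏ j ∈ Finset.range (r-(k+1)), qBracket q (α + (j:ℝ)*(s-1))) (n+1)
    unfold Rf
    rw [h, genStirling_succ_zero]
    ring
  have h2 : ∀ i ∈ Finset.range (n+1),
      q ^ (α * ((k+1:ℕ):ℝ)) * genStirling s q (n+1) (i+1) * qBinom (q^(s-1)) (i+1) (k+1) *
          ∏ j ∈ Finset.range ((i+1)-(k+1)), qBracket q (α + (j:ℝ)*(s-1))
      = (q ^ (α * ((k+1:ℕ):ℝ)) * (q^(s*(n:ℝ)-(s-1)*(i:ℝ)) * genStirling s q n i) *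
            qBinom (q^(s-1)) (i+1) (k+1) *
            ∏ j ∈ Finset.range ((i+1)-(k+1)), qBracket q (α + (j:ℝ)*(s-1)))
        + (q ^ (α * ((k+1:ℕ):ℝ)) * qBracket q (s*(n:ℝ)-(s-1)*(((i+1:ℕ)):ℝ)) *
            genStirling s q n (i+1) * qBinom (q^(s-1)) (i+1) (k+1) *
            ∏ j ∈ Finset.range ((i+1)-(k+1)), qBracket q (α + (j:ℝ)*(s-1))) := by
    intro i hi
    rw [genStirling_succ_succ s q n i]
    push_cast
    ring
  have h3 : (∑ i ∈ Finset.range (n+1),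
        q ^ (α * ((k+1:ℕ):ℝ)) * qBracket q (s*(n:ℝ)-(s-1)*(((i+1:ℕ)):ℝ)) *
          genStirling s q n (i+1) * qBinom (q^(s-1)) (i+1) (k+1) *
          ∏ j ∈ Finset.range ((i+1)-(k+1)), qBracket q (α + (j:ℝ)*(s-1)))
      = ∑ r ∈ Finset.range (n+1),
          q ^ (α * ((k+1:ℕ):ℝ)) * qBracket q (s*(n:ℝ)-(s-1)*(r:ℝ)) *
            genStirling s q n r * qBinom (q^(s-1)) r (k+1) *
            ∏ j ∈ Finset.range (r-(k+1)), qBracket q (α + (j:ℝ)*(s-1)) := by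
    have ha := Finset.sum_range_succ'
      (fun r => q ^ (α * ((k+1:ℕ):ℝ)) * qBracket q (s*(n:ℝ)-(s-1)*(r:ℝ)) *
        genStirling s q n r * qBinom (q^(s-1)) r (k+1) *
        ∏ j ∈ Finset.range (r-(k+1)), qBracket q (α + (j:ℝ)*(s-1))) (n+1)
    have hb := Finset.sum_range_succ
      (fun r => q ^ (α * ((k+1:ℕ):ℝ)) * qBracket q (s*(n:ℝ)-(s-1)*(r:ℝ)) *
        genStirling s q n r * qBinom (q^(s-1)) r (k+1) *
        ∏ j ∈ Finset.range (r-(k+1)), qBracket q (α + (j:ℝ)*(s-1))) (n+1)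
    simp only [qBinom_gt (q^(s-1)) 0 (k+1) (by omega),
      genStirling_eq_zero s q n (n+1) (by omega), mul_zero, zero_mul, add_zero] at ha hb
    rw [← ha, hb]
  rw [h1, Finset.sum_congr rfl h2, Finset.sum_add_distrib, h3]
  unfold Rf
  rw [Finset.mul_sum, Finset.mul_sum, ← Finset.sum_add_distrib, ← Finset.sum_add_distrib]
  apply Finset.sum_congr rfl
  intro i hi
  rw [show (i+1)-(k+1) = i-k from by omega, qBinom_pascal (q^(s-1)) i k]
  by_cases hik : k+1 ≤ i
  · rw [rpow_pow q (s-1) hq (i-k), Nat.cast_sub (show k ≤ i from by omega)]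
    rw [show i-k = (i-(k+1))+1 from by omega, Finset.prod_range_succ, Nat.cast_sub hik]
    push_cast
    linear_combination
      (genStirling s q n i) * RstepA q s α hq (n:ℝ) (i:ℝ) (k:ℝ) (qBinom (q^(s-1)) i k)
        ((∏ j ∈ Finset.range (i-(k+1)), qBracket q (α + (j:ℝ)*(s-1))) *
          qBracket q (α + ((i:ℝ)-((k:ℝ)+1))*(s-1)))
      + (genStirling s q n i) * RstepB q s α hq hq1 (n:ℝ) (i:ℝ) (k:ℝ)
          (qBinom (q^(s-1)) i (k+1))
          (∏ j ∈ Finset.range (i-(k+1)), qBracket q (α + (j:ℝ)*(s-1)))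
  · by_cases hik2 : i = k
    · subst hik2
      rw [qBinom_gt (q^(s-1)) i (i+1) (by omega), Nat.sub_self, pow_zero]
      have he : q^(α*((i:ℝ)+1)) * q^(s*(n:ℝ)-(s-1)*(i:ℝ))
          = q^(s*(n:ℝ)-(s-1)*(i:ℝ)+α) * q^(α*(i:ℝ)) := by
        rw [← Real.rpow_add hq, ← Real.rpow_add hq]; congr 1; ring
      push_cast
      linear_combination
        (genStirling s q n i * qBinom (q^(s-1)) i i *
          ∏ j ∈ Finset.range 0, qBracket q (α + (j:ℝ)*(s-1))) * he
    · rw [qBinom_gt (q^(s-1)) i k (by omega), qBinom_gt (q^(s-1)) i (k+1) (by omega)]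
      ring

lemma Lf_zero (q s α : ℝ) (n : ℕ) :
    Lf q s α n 0 = ∏ i ∈ Finset.range n, qBracket q (α + s*(i:ℝ)) := by
  unfold Lf
  rw [Finset.sum_eq_single_of_mem 0 (Finset.mem_range.mpr (Nat.succ_pos n))
    (fun b _ hb0 => by
      obtain ⟨b', rfl⟩ := Nat.exists_eq_succ_of_ne_zero hb0
      rw [genStirling_succ_zero]
      ring)]
  rw [qBinom_zero_right, show genStirling s q 0 0 = 1 from rfl, Nat.sub_zero]
  norm_num

lemma Lf_rec0 (q s α : ℝ) (n : ℕ) :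
    Lf q s α (n+1) 0 = qBracket q (α + s*(n:ℝ)) * Lf q s α n 0 := by
  rw [Lf_zero, Lf_zero, Finset.prod_range_succ]
  ring

lemma Rf_rec0 (q s α : ℝ) (hq : 0 < q) (hq1 : q ≠ 1) (n : ℕ) :
    Rf q s α (n+1) 0 = qBracket q (α + s*(n:ℝ)) * Rf q s α n 0 := by
  have h1 : Rf q s α (n+1) 0
      = ∑ i ∈ Finset.range (n+1),
          q ^ (α * ((0:ℕ):ℝ)) * genStirling s q (n+1) (i+1) * qBinom (q^(s-1)) (i+1) 0 *
            ∏ j ∈ Finset.range ((i+1)-0), qBracket q (α + (j:ℝ)*(s-1)) := by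
    have h := Finset.sum_range_succ'
      (fun r => q ^ (α * ((0:ℕ):ℝ)) * genStirling s q (n+1) r * qBinom (q^(s-1)) r 0 *
        ∏ j ∈ Finset.range (r-0), qBracket q (α + (j:ℝ)*(s-1))) (n+1)
    unfold Rf
    rw [h, genStirling_succ_zero]
    ring
  have h2 : ∀ i ∈ Finset.range (n+1),
      q ^ (α * ((0:ℕ):ℝ)) * genStirling s q (n+1) (i+1) * qBinom (q^(s-1)) (i+1) 0 *
          ∏ j ∈ Finset.range ((i+1)-0), qBracket q (α + (j:ℝ)*(s-1))
      = (q ^ (α * ((0:ℕ):ℝ)) * (q^(s*(n:ℝ)-(s-1)*(i:ℝ)) * genStirling s q n i) *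
            qBinom (q^(s-1)) (i+1) 0 *
            ∏ j ∈ Finset.range ((i+1)-0), qBracket q (α + (j:ℝ)*(s-1)))
        + (q ^ (α * ((0:ℕ):ℝ)) * qBracket q (s*(n:ℝ)-(s-1)*(((i+1:ℕ)):ℝ)) *
            genStirling s q n (i+1) * qBinom (q^(s-1)) (i+1) 0 *
            ∏ j ∈ Finset.range ((i+1)-0), qBracket q (α + (j:ℝ)*(s-1))) := by
    intro i hi
    rw [genStirling_succ_succ s q n i]
    push_cast
    ring
  have h3 : (∑ i ∈ Finset.range (n+1),
        q ^ (α * ((0:ℕ):ℝ)) * qBracket q (s*(n:ℝ)-(s-1)*(((i+1:ℕ)):ℝ)) *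
          genStirling s q n (i+1) * qBinom (q^(s-1)) (i+1) 0 *
          ∏ j ∈ Finset.range ((i+1)-0), qBracket q (α + (j:ℝ)*(s-1)))
      = ∑ r ∈ Finset.range (n+1),
          q ^ (α * ((0:ℕ):ℝ)) * qBracket q (s*(n:ℝ)-(s-1)*(r:ℝ)) *
            genStirling s q n r * qBinom (q^(s-1)) r 0 *
            ∏ j ∈ Finset.range (r-0), qBracket q (α + (j:ℝ)*(s-1)) := by
    have ha := Finset.sum_range_succ'
      (fun r => q ^ (α * ((0:ℕ):ℝ)) * qBracket q (s*(n:ℝ)-(s-1)*(r:ℝ)) *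
        genStirling s q n r * qBinom (q^(s-1)) r 0 *
        ∏ j ∈ Finset.range (r-0), qBracket q (α + (j:ℝ)*(s-1))) (n+1)
    have hb := Finset.sum_range_succ
      (fun r => q ^ (α * ((0:ℕ):ℝ)) * qBracket q (s*(n:ℝ)-(s-1)*(r:ℝ)) *
        genStirling s q n r * qBinom (q^(s-1)) r 0 *
        ∏ j ∈ Finset.range (r-0), qBracket q (α + (j:ℝ)*(s-1))) (n+1)
    have hzero : qBracket q (s*(n:ℝ)-(s-1)*(((0:ℕ)):ℝ)) * genStirling s q n 0 = 0 := by
      cases n with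
      | zero =>
        rw [show (s*((0:ℕ):ℝ)-(s-1)*(((0:ℕ)):ℝ)) = 0 from by norm_num, qBracket_zero]
        ring
      | succ m => rw [genStirling_succ_zero]; ring
    have hz2 : ∀ x y z : ℝ,
        x * qBracket q (s*(n:ℝ)-(s-1)*(((0:ℕ)):ℝ)) * genStirling s q n 0 * y * z = 0 := by
      intro x y z
      calc x * qBracket q (s*(n:ℝ)-(s-1)*(((0:ℕ)):ℝ)) * genStirling s q n 0 * y * z
          = (qBracket q (s*(n:ℝ)-(s-1)*(((0:ℕ)):ℝ)) * genStirling s q n 0) * (x*y*z) := by ring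
        _ = 0 := by rw [hzero]; ring
    simp only [genStirling_eq_zero s q n (n+1) (by omega), mul_zero, zero_mul, add_zero] at ha hb
    rw [hz2] at ha
    rw [add_zero] at ha
    rw [← ha, hb]
  rw [h1, Finset.sum_congr rfl h2, Finset.sum_add_distrib, h3]
  unfold Rf
  rw [Finset.mul_sum, ← Finset.sum_add_distrib]
  apply Finset.sum_congr rfl
  intro i hi
  rw [qBinom_zero_right, qBinom_zero_right, Nat.sub_zero, Nat.sub_zero,
    Finset.prod_range_succ]
  push_cast
  simp only [mul_zero, Real.rpow_zero, one_mul, mul_one]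
  linear_combination (genStirling s q n i) *
    Rstep0 q s α hq hq1 (n:ℝ) (i:ℝ) (∏ j ∈ Finset.range i, qBracket q (α + (j:ℝ)*(s-1)))

lemma LR_base (q s α : ℝ) (k : ℕ) : Lf q s α 0 k = Rf q s α 0 k := by
  unfold Lf Rf
  rw [Finset.sum_range_one, Finset.sum_range_one]
  cases k with
  | zero =>
    rw [qBinom_zero_right, qBinom_zero_right, show genStirling s q 0 0 = 1 from rfl]
    norm_num
  | succ m =>
    rw [genStirling_zero_succ, qBinom_gt (q^(s-1)) 0 (m+1) (by omega)]
    ring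

/-- Two expansions for the total weight of all placements of `n - k` rooks on the
augmented staircase board `J'_{n;α}`. -/
theorem two_expansions_eq (q s : ℝ) (hq : 0 < q) (hq1 : q ≠ 1) (n k : ℕ) (α : ℝ) :
    ∑ r ∈ Finset.range (n + 1),
        q ^ (α * (r : ℝ)) * qBinom (q ^ s) n r * genStirling s q r k *
          ∏ i ∈ Finset.range (n - r), qBracket q (α + s * (i : ℝ))
    = ∑ r ∈ Finset.range (n + 1),
        q ^ (α * (k : ℝ)) * genStirling s q n r * qBinom (q ^ (s - 1)) r k *
          ∏ i ∈ Finset.range (r - k), qBracket q (α + (i : ℝ) * (s - 1)) := by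
  show Lf q s α n k = Rf q s α n k
  induction n generalizing k with
  | zero => exact LR_base q s α k
  | succ n ih =>
    cases k with
    | zero => rw [Lf_rec0 q s α n, Rf_rec0 q s α hq hq1 n, ih 0]
    | succ k => rw [Lf_rec q s α hq hq1 n k, Rf_rec q s α hq hq1 n k, ih k, ih (k+1)]
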